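/- arXiv:math-ph/0209039 — 2 statements merged into one kernel-verified Lean document; each statement's English description precedes it below -/
import Mathlib

section
/- Let B_c > 0 and A⁰(y) = cos(2πy). Then for all l, m ∈ ℕ there exist real numbers a_{l,m} and b_{l,m} such that for all p ∈ ℝ: A⁰_{l,m}(p) = a_{l,m}·cos(2πp) + b_{l,m}·sin(2πp); moreover a_{l,m} = 0 whenever m + l is even, and b_{l,m} = 0 whenever m + l is odd. -/
open Real MeasureTheory

/-- The `m`-th Weber–Hermite function (normalized Hermite function). -/
noncomputable def weberHermite (m : ℕ) (y : ℝ) : ℝ :=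
  ((-1 : ℝ) ^ m / Real.sqrt (Real.sqrt π * 2 ^ m * m.factorial)) *
    Real.exp (y ^ 2 / 2) * iteratedDeriv m (fun t => Real.exp (-t ^ 2)) y

/-- `A⁰_{l,m}(p) = B_c^{3/2} ∫ A⁰(y+p) y Ω_l(√B_c y) Ω_m(√B_c y) dy`. -/
noncomputable def Acoef0 (Bc : ℝ) (A0 : ℝ → ℝ) (l m : ℕ) (p : ℝ) : ℝ :=
  Bc ^ ((3 : ℝ) / 2) * ∫ y : ℝ, A0 (y + p) * y *
    weberHermite l (Real.sqrt Bc * y) * weberHermite m (Real.sqrt Bc * y)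

open Real MeasureTheory

lemma exists_poly_iteratedDeriv (m : ℕ) :
    ∃ P : Polynomial ℝ, ∀ y : ℝ,
      iteratedDeriv m (fun t => Real.exp (-t ^ 2)) y = P.eval y * Real.exp (-y ^ 2) := by
  induction m with
  | zero => exact ⟨1, fun y => by simp⟩
  | succ n ih =>
    obtain ⟨P, hP⟩ := ih
    refine ⟨Polynomial.derivative P - Polynomial.C 2 * Polynomial.X * P, fun y => ?_⟩
    have hfun : iteratedDeriv n (fun t => Real.exp (-t ^ 2))
        = fun y : ℝ => P.eval y * Real.exp (-y ^ 2) := funext hP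
    rw [iteratedDeriv_succ, hfun]
    have h1 : HasDerivAt (fun y : ℝ => -y ^ 2) (-(2 * y)) y := by
      exact HasDerivAt.congr_deriv (f := fun y : ℝ => -y ^ 2) (hasDerivAt_pow 2 y).neg (by simp)
    have h2 : HasDerivAt (fun y : ℝ => Real.exp (-y ^ 2))
        (Real.exp (-y ^ 2) * (-(2 * y))) y := h1.exp
    have h3 : HasDerivAt (fun y : ℝ => P.eval y * Real.exp (-y ^ 2))
        ((Polynomial.derivative P).eval y * Real.exp (-y ^ 2)
          + P.eval y * (Real.exp (-y ^ 2) * (-(2 * y)))) y :=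
      (P.hasDerivAt y).mul h2
    rw [h3.deriv]
    simp only [Polynomial.eval_sub, Polynomial.eval_mul, Polynomial.eval_C, Polynomial.eval_X]
    ring

lemma weberHermite_neg (m : ℕ) (x : ℝ) :
    weberHermite m (-x) = (-1 : ℝ) ^ m * weberHermite m x := by
  have hiter : iteratedDeriv m (fun t : ℝ => Real.exp (-t ^ 2)) (-x)
      = (-1 : ℝ) ^ m * iteratedDeriv m (fun t : ℝ => Real.exp (-t ^ 2)) x := by
    have h := iteratedDeriv_comp_neg m (fun t : ℝ => Real.exp (-t ^ 2)) x
    have heq : (fun x : ℝ => Real.exp (-(-x) ^ 2)) = fun t : ℝ => Real.exp (-t ^ 2) := by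
      funext t; rw [neg_sq]
    rw [heq] at h
    rw [h, smul_eq_mul, ← mul_assoc, ← mul_pow]
    norm_num
  unfold weberHermite
  rw [hiter, neg_sq]
  ring

lemma integrable_pow_mul_exp_neg_mul_sq' {b : ℝ} (hb : 0 < b) (n : ℕ) :
    Integrable fun x : ℝ => x ^ n * Real.exp (-b * x ^ 2) := by
  have hmain : Integrable fun x : ℝ =>
      ((n.factorial : ℝ) * Real.exp (1 / (2 * b))) * Real.exp (-(b / 2) * x ^ 2) :=
    (integrable_exp_neg_mul_sq (by linarith)).const_mul _
  refine hmain.mono' ?_ (Filter.Eventually.of_forall fun x => ?_)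
  · exact Continuous.aestronglyMeasurable (by fun_prop)
  · rw [Real.norm_eq_abs, abs_mul, abs_of_nonneg (Real.exp_pos _).le, abs_pow]
    have h1 : |x| ^ n ≤ (n.factorial : ℝ) * Real.exp |x| := by
      have h := Real.pow_div_factorial_le_exp |x| (abs_nonneg x) n
      have hf : (0:ℝ) < (n.factorial : ℝ) := by exact_mod_cast n.factorial_pos
      rw [div_le_iff₀ hf] at h
      linarith [h]
    have h2 : Real.exp |x| * Real.exp (-b * x ^ 2)
        ≤ Real.exp (1 / (2 * b)) * Real.exp (-(b / 2) * x ^ 2) := by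
      rw [← Real.exp_add, ← Real.exp_add]
      apply Real.exp_le_exp.2
      have h2b : (0:ℝ) < 2 * b := by linarith
      have key : 2 * b * |x| ≤ 1 + b ^ 2 * x ^ 2 := by
        nlinarith [sq_nonneg (b * |x| - 1), sq_abs x]
      have hkey : |x| ≤ 1 / (2 * b) + (b / 2) * x ^ 2 := by
        rw [← sub_nonneg]
        have : 1 / (2 * b) + (b / 2) * x ^ 2 - |x|
            = (1 + b ^ 2 * x ^ 2 - 2 * b * |x|) / (2 * b) := by field_simp
        rw [this]
        exact div_nonneg (by linarith) h2b.le
      linarith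
    calc |x| ^ n * Real.exp (-b * x ^ 2)
        ≤ ((n.factorial : ℝ) * Real.exp |x|) * Real.exp (-b * x ^ 2) := by
          apply mul_le_mul_of_nonneg_right h1 (Real.exp_pos _).le
      _ = (n.factorial : ℝ) * (Real.exp |x| * Real.exp (-b * x ^ 2)) := by ring
      _ ≤ (n.factorial : ℝ) * (Real.exp (1 / (2 * b)) * Real.exp (-(b / 2) * x ^ 2)) := by
          apply mul_le_mul_of_nonneg_left h2 (by positivity)
      _ = ((n.factorial : ℝ) * Real.exp (1 / (2 * b))) * Real.exp (-(b / 2) * x ^ 2) := by ring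

lemma integrable_poly_mul_exp {b : ℝ} (hb : 0 < b) (P : Polynomial ℝ) :
    Integrable fun x : ℝ => P.eval x * Real.exp (-b * x ^ 2) := by
  have h : (fun x : ℝ => P.eval x * Real.exp (-b * x ^ 2))
      = fun x : ℝ => ∑ i ∈ Finset.range (P.natDegree + 1),
          P.coeff i * (x ^ i * Real.exp (-b * x ^ 2)) := by
    funext x
    rw [Polynomial.eval_eq_sum_range, Finset.sum_mul]
    exact Finset.sum_congr rfl fun i _ => by ring
  rw [h]
  exact integrable_finset_sum _ fun i _ =>
    (integrable_pow_mul_exp_neg_mul_sq' hb i).const_mul _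

lemma integral_zero_of_neg (F : ℝ → ℝ) (h : ∀ y, F (-y) = -F y) :
    (∫ y : ℝ, F y) = 0 := by
  have h0 := MeasureTheory.integral_neg_eq_self F (volume : Measure ℝ)
  simp_rw [h, MeasureTheory.integral_neg] at h0
  linarith

lemma weberHermite_eq (k : ℕ) :
    ∃ (K : ℝ) (P : Polynomial ℝ), ∀ x : ℝ,
      weberHermite k x = K * (P.eval x * Real.exp (-x ^ 2 / 2)) := by
  obtain ⟨P, hP⟩ := exists_poly_iteratedDeriv k
  refine ⟨(-1 : ℝ) ^ k / Real.sqrt (Real.sqrt π * 2 ^ k * k.factorial), P, fun x => ?_⟩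
  have h : Real.exp (x ^ 2 / 2) * (P.eval x * Real.exp (-x ^ 2))
      = P.eval x * Real.exp (-x ^ 2 / 2) := by
    rw [mul_comm (P.eval x) (Real.exp (-x ^ 2)), ← mul_assoc, ← Real.exp_add, mul_comm]
    congr 1
    ring
  rw [weberHermite, hP, mul_assoc, h]

/-- **For `A⁰(y) = cos(2πy)`,** `A⁰_{l,m}(p) = a_{l,m} cos(2πp) + b_{l,m} sin(2πp)`
with `a_{l,m} = 0` if `m + l` is even and `b_{l,m} = 0` if `m + l` is odd. -/
theorem Acoef0_cos (Bc : ℝ) (hBc : 0 < Bc) (l m : ℕ) :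
    ∃ a b : ℝ,
      (∀ p : ℝ, Acoef0 Bc (fun y => Real.cos (2 * π * y)) l m p =
        a * Real.cos (2 * π * p) + b * Real.sin (2 * π * p)) ∧
      (Even (m + l) → a = 0) ∧ (Odd (m + l) → b = 0) := by
  obtain ⟨Kl, Pl, hKl⟩ := weberHermite_eq l
  obtain ⟨Km, Pm, hKm⟩ := weberHermite_eq m
  set c : ℝ := Real.sqrt Bc with hc
  have hc2 : c ^ 2 = Bc := Real.sq_sqrt hBc.le
  set W : ℝ → ℝ := fun y => y * weberHermite l (c * y) * weberHermite m (c * y) with hW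
  set S : Polynomial ℝ := Polynomial.X * Pl.comp (Polynomial.C c * Polynomial.X)
      * Pm.comp (Polynomial.C c * Polynomial.X) with hS
  -- W in polynomial-Gaussian form
  have hWeq : ∀ y : ℝ, W y = (Kl * Km) * (S.eval y * Real.exp (-Bc * y ^ 2)) := by
    intro y
    have h1 : (c * y) ^ 2 = Bc * y ^ 2 := by rw [mul_pow, hc2]
    have hSy : S.eval y = y * Pl.eval (c * y) * Pm.eval (c * y) := by
      simp [hS, Polynomial.eval_comp]
    have e : Real.exp (-(c * y) ^ 2 / 2) * Real.exp (-(c * y) ^ 2 / 2)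
        = Real.exp (-Bc * y ^ 2) := by
      rw [← Real.exp_add, h1]; congr 1; ring
    simp only [hW, hKl, hKm]
    rw [show y * (Kl * (Pl.eval (c * y) * Real.exp (-(c * y) ^ 2 / 2)))
          * (Km * (Pm.eval (c * y) * Real.exp (-(c * y) ^ 2 / 2)))
        = (Kl * Km) * ((y * Pl.eval (c * y) * Pm.eval (c * y))
          * (Real.exp (-(c * y) ^ 2 / 2) * Real.exp (-(c * y) ^ 2 / 2))) from by ring,
      e, hSy]
  have hWint : Integrable W := by
    have h : W = fun y : ℝ => (Kl * Km) * (S.eval y * Real.exp (-Bc * y ^ 2)) := funext hWeq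
    rw [h]
    exact (integrable_poly_mul_exp hBc S).const_mul _
  have hIc : Integrable fun y : ℝ => Real.cos (2 * π * y) * W y :=
    hWint.bdd_mul (c := 1) (Continuous.aestronglyMeasurable (by fun_prop))
      (Filter.Eventually.of_forall fun x => by rw [Real.norm_eq_abs]; exact Real.abs_cos_le_one _)
  have hIs : Integrable fun y : ℝ => Real.sin (2 * π * y) * W y :=
    hWint.bdd_mul (c := 1) (Continuous.aestronglyMeasurable (by fun_prop))
      (Filter.Eventually.of_forall fun x => by rw [Real.norm_eq_abs]; exact Real.abs_sin_le_one _)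
  -- parity of W
  have hWneg : ∀ y : ℝ, W (-y) = (-1 : ℝ) ^ (m + l) * -W y := by
    intro y
    simp only [hW, mul_neg, weberHermite_neg]
    rw [pow_add]
    ring
  refine ⟨Bc ^ ((3 : ℝ) / 2) * ∫ y : ℝ, Real.cos (2 * π * y) * W y,
    -(Bc ^ ((3 : ℝ) / 2) * ∫ y : ℝ, Real.sin (2 * π * y) * W y), ?_, ?_, ?_⟩
  · intro p
    rw [Acoef0]
    have hpt : (fun y : ℝ => (fun y => Real.cos (2 * π * y)) (y + p) * y
          * weberHermite l (Real.sqrt Bc * y) * weberHermite m (Real.sqrt Bc * y))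
        = fun y : ℝ => Real.cos (2 * π * p) * (Real.cos (2 * π * y) * W y)
          - Real.sin (2 * π * p) * (Real.sin (2 * π * y) * W y) := by
      funext y
      simp only [hW, ← hc]
      rw [mul_add, Real.cos_add]
      ring
    rw [hpt, integral_sub (hIc.const_mul _) (hIs.const_mul _),
      integral_const_mul, integral_const_mul]
    ring
  · intro h
    have hz : (∫ y : ℝ, Real.cos (2 * π * y) * W y) = 0 := by
      apply integral_zero_of_neg
      intro y
      rw [mul_neg, Real.cos_neg, hWneg, h.neg_one_pow]
      ring
    rw [hz, mul_zero]
  · intro h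
    have hz : (∫ y : ℝ, Real.sin (2 * π * y) * W y) = 0 := by
      apply integral_zero_of_neg
      intro y
      rw [mul_neg, Real.sin_neg, hWneg, h.neg_one_pow]
      ring
    rw [hz, mul_zero, neg_zero]
end

section
/- Let c > 0 and l, m ∈ ℕ. Then there exists a constant C > 0 such that for every bounded continuous function f : ℝ → ℂ and every a ∈ ℝ: |∫_ℝ f(y)·Ω_l(c(y+a))·Ω_m(c·y) dy| ≤ C·(sup_{y∈ℝ} |f(y)|)·e^{−c²a²/8}. (In particular, the overlap coefficients of Weber–Hermite functions whose centers are shifted by a decay exponentially in the shift; this yields the exponential decay in k of the coefficients Ã¹⁽ᵏ⁾_{l,m} and Â¹⁽ᵏ⁾_{l,m}.) -/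
open Real

/-- Each iterated derivative of the Gaussian is a polynomial times the Gaussian. -/
lemma iteratedDeriv_gaussian_poly (m : ℕ) :
    ∃ p : Polynomial ℝ, ∀ y : ℝ,
      iteratedDeriv m (fun t => Real.exp (-t ^ 2)) y = p.eval y * Real.exp (-y ^ 2) := by
  induction m with
  | zero => exact ⟨1, fun y => by simp⟩
  | succ n ih =>
    obtain ⟨p, hp⟩ := ih
    refine ⟨p.derivative - Polynomial.C 2 * Polynomial.X * p, fun y => ?_⟩
    rw [iteratedDeriv_succ]
    have hfun : iteratedDeriv n (fun t => Real.exp (-t ^ 2)) =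
        fun y => p.eval y * Real.exp (-y ^ 2) := funext hp
    rw [hfun]
    have h1 : HasDerivAt (fun y : ℝ => -y ^ 2) (-(2 * y)) y := by
      have h0 := (hasDerivAt_pow 2 y).neg
      norm_num at h0
      exact h0
    have h3 := (p.hasDerivAt y).mul h1.exp
    rw [(show HasDerivAt (fun y => p.eval y * Real.exp (-y ^ 2)) _ y from h3).deriv]
    simp only [Polynomial.eval_sub, Polynomial.eval_mul, Polynomial.eval_C, Polynomial.eval_X]
    ring

lemma abs_pow_le_exp_quarter (n : ℕ) (y : ℝ) :
    |y| ^ n ≤ (4 ^ n * n.factorial) * Real.exp (y ^ 2 / 4) := by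
  have hexp1 : (1 : ℝ) ≤ Real.exp (y ^ 2 / 4) := Real.one_le_exp (by positivity)
  have hfac : (1 : ℝ) ≤ 4 ^ n * n.factorial := by
    have : (1 : ℝ) ≤ (n.factorial : ℝ) := by exact_mod_cast n.factorial_pos
    have h4 : (1 : ℝ) ≤ 4 ^ n := one_le_pow₀ (by norm_num)
    nlinarith
  rcases le_or_gt |y| 1 with h | h
  · calc |y| ^ n ≤ 1 ^ n := pow_le_pow_left₀ (abs_nonneg y) h n
    _ = 1 := one_pow n
    _ ≤ (4 ^ n * n.factorial) * Real.exp (y ^ 2 / 4) := by nlinarith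
  · have key : (y ^ 2 / 4) ^ n / n.factorial ≤ Real.exp (y ^ 2 / 4) :=
      Real.pow_div_factorial_le_exp (x := y ^ 2 / 4) (by positivity) n
    have h2 : |y| ^ n ≤ |y| ^ (2 * n) := pow_le_pow_right₀ h.le (by omega)
    have h3 : |y| ^ (2 * n) = (y ^ 2) ^ n := by
      rw [pow_mul, sq_abs]
    have hfacpos : (0 : ℝ) < n.factorial := by exact_mod_cast n.factorial_pos
    have h4 : (y ^ 2) ^ n ≤ (4 ^ n * n.factorial) * Real.exp (y ^ 2 / 4) := by
      have := (div_le_iff₀ hfacpos).mp key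
      calc (y ^ 2) ^ n = 4 ^ n * (y ^ 2 / 4) ^ n := by
            rw [div_pow]; field_simp
      _ ≤ 4 ^ n * (Real.exp (y ^ 2 / 4) * n.factorial) := by
            have h4n : (0:ℝ) < 4 ^ n := by positivity
            nlinarith
      _ = (4 ^ n * n.factorial) * Real.exp (y ^ 2 / 4) := by ring
    calc |y| ^ n ≤ (y ^ 2) ^ n := h3 ▸ h2
    _ ≤ _ := h4

lemma poly_le_exp_quarter (p : Polynomial ℝ) :
    ∃ K : ℝ, 0 < K ∧ ∀ y : ℝ, |p.eval y| ≤ K * Real.exp (y ^ 2 / 4) := by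
  set d := p.natDegree + 1 with hd
  refine ⟨(∑ i ∈ Finset.range d, |p.coeff i| * (4 ^ i * i.factorial)) + 1, by positivity,
    fun y => ?_⟩
  have hexp1 : (1 : ℝ) ≤ Real.exp (y ^ 2 / 4) := Real.one_le_exp (by positivity)
  have h1 : |p.eval y| ≤ ∑ i ∈ Finset.range d, |p.coeff i| * |y| ^ i := by
    rw [Polynomial.eval_eq_sum_range]
    refine (Finset.abs_sum_le_sum_abs _ _).trans ?_
    apply Finset.sum_le_sum
    intro i _
    rw [abs_mul, abs_pow]
  have h2 : ∑ i ∈ Finset.range d, |p.coeff i| * |y| ^ i ≤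
      (∑ i ∈ Finset.range d, |p.coeff i| * (4 ^ i * i.factorial)) * Real.exp (y ^ 2 / 4) := by
    rw [Finset.sum_mul]
    apply Finset.sum_le_sum
    intro i _
    calc |p.coeff i| * |y| ^ i
        ≤ |p.coeff i| * ((4 ^ i * i.factorial) * Real.exp (y ^ 2 / 4)) :=
          mul_le_mul_of_nonneg_left (abs_pow_le_exp_quarter i y) (abs_nonneg _)
      _ = |p.coeff i| * (4 ^ i * i.factorial) * Real.exp (y ^ 2 / 4) := by ring
  calc |p.eval y| ≤ (∑ i ∈ Finset.range d, |p.coeff i| * (4 ^ i * i.factorial)) *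
        Real.exp (y ^ 2 / 4) := h1.trans h2
    _ ≤ _ := by
        apply mul_le_mul_of_nonneg_right _ (Real.exp_nonneg _)
        linarith

lemma weberHermite_bound (m : ℕ) :
    ∃ K : ℝ, 0 < K ∧ ∀ y : ℝ, |weberHermite m y| ≤ K * Real.exp (-(y ^ 2) / 4) := by
  obtain ⟨p, hp⟩ := iteratedDeriv_gaussian_poly m
  obtain ⟨Kp, hKp, hKpb⟩ := poly_le_exp_quarter p
  set c0 : ℝ := (-1 : ℝ) ^ m / Real.sqrt (Real.sqrt π * 2 ^ m * m.factorial) with hc0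
  refine ⟨(|c0| + 1) * Kp, by positivity, fun y => ?_⟩
  have h1 : |weberHermite m y| = |c0| * Real.exp (y ^ 2 / 2) * (|p.eval y| * Real.exp (-y ^ 2)) := by
    rw [weberHermite, hp]
    rw [abs_mul, abs_mul, abs_mul, Real.abs_exp, Real.abs_exp]
  rw [h1]
  have h2 : |p.eval y| ≤ Kp * Real.exp (y ^ 2 / 4) := hKpb y
  have h3 : Real.exp (y ^ 2 / 2) * (Kp * Real.exp (y ^ 2 / 4) * Real.exp (-y ^ 2)) =
      Kp * Real.exp (-(y ^ 2) / 4) := by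
    have hE : Real.exp (y ^ 2 / 2) * (Real.exp (y ^ 2 / 4) * Real.exp (-y ^ 2)) =
        Real.exp (-(y ^ 2) / 4) := by
      rw [← Real.exp_add, ← Real.exp_add]
      congr 1
      ring
    calc Real.exp (y ^ 2 / 2) * (Kp * Real.exp (y ^ 2 / 4) * Real.exp (-y ^ 2)) =
        Kp * (Real.exp (y ^ 2 / 2) * (Real.exp (y ^ 2 / 4) * Real.exp (-y ^ 2))) := by ring
      _ = Kp * Real.exp (-(y ^ 2) / 4) := by rw [hE]
  have h4 : |c0| * Real.exp (y ^ 2 / 2) * (|p.eval y| * Real.exp (-y ^ 2)) ≤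
      |c0| * (Kp * Real.exp (-(y ^ 2) / 4)) := by
    rw [← h3, mul_assoc]
    exact mul_le_mul_of_nonneg_left (mul_le_mul_of_nonneg_left
      (mul_le_mul_of_nonneg_right h2 (Real.exp_nonneg _)) (Real.exp_nonneg _)) (abs_nonneg _)
  refine h4.trans ?_
  have : (0:ℝ) ≤ Kp * Real.exp (-(y ^ 2) / 4) := by positivity
  nlinarith [abs_nonneg c0]

/-- **Exponential decay of shifted overlap integrals of Weber–Hermite
functions:** for `c > 0` and `l, m ∈ ℕ` there is `C > 0` such that for every
bounded continuous `f : ℝ → ℂ` and every shift `a`,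
`|∫ f(y) Ω_l(c(y+a)) Ω_m(cy) dy| ≤ C (sup |f|) e^{−c²a²/8}`. -/
theorem overlap_exponential_decay (c : ℝ) (hc : 0 < c) (l m : ℕ) :
    ∃ C : ℝ, 0 < C ∧
      ∀ f : ℝ → ℂ, Continuous f → (∃ M : ℝ, ∀ y : ℝ, ‖f y‖ ≤ M) →
        ∀ a : ℝ,
          ‖∫ y : ℝ, f y * (weberHermite l (c * (y + a)) : ℂ) *
              (weberHermite m (c * y) : ℂ)‖
            ≤ C * (⨆ y : ℝ, ‖f y‖) * Real.exp (-(c ^ 2 * a ^ 2) / 8) := by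
  obtain ⟨Kl, hKl, hKlb⟩ := weberHermite_bound l
  obtain ⟨Km, hKm, hKmb⟩ := weberHermite_bound m
  set b : ℝ := c ^ 2 / 2 with hb
  have hbpos : 0 < b := by positivity
  refine ⟨Kl * Km * Real.sqrt (π / b), by positivity, ?_⟩
  intro f hfc ⟨M, hM⟩ a
  set S : ℝ := ⨆ y : ℝ, ‖f y‖ with hS
  have hbdd : BddAbove (Set.range fun y : ℝ => ‖f y‖) := ⟨M, by rintro _ ⟨y, rfl⟩; exact hM y⟩
  have hSle : ∀ y : ℝ, ‖f y‖ ≤ S := fun y => le_ciSup hbdd y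
  have hS0 : 0 ≤ S := le_trans (norm_nonneg _) (hSle 0)
  -- the dominating function
  set g : ℝ → ℝ := fun y =>
    S * Kl * Km * Real.exp (-(c ^ 2 * a ^ 2) / 8) * Real.exp (-b * (y + a / 2) ^ 2) with hg
  have hgint : MeasureTheory.Integrable g := by
    have h1 : MeasureTheory.Integrable (fun y : ℝ => Real.exp (-b * y ^ 2)) :=
      integrable_exp_neg_mul_sq hbpos
    exact (h1.comp_add_right (a / 2)).const_mul _
  have hbound : ∀ y : ℝ,
      ‖f y * (weberHermite l (c * (y + a)) : ℂ) * (weberHermite m (c * y) : ℂ)‖ ≤ g y := by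
    intro y
    rw [norm_mul, norm_mul, Complex.norm_real, Complex.norm_real,
      Real.norm_eq_abs, Real.norm_eq_abs]
    have h1 := hKlb (c * (y + a))
    have h2 := hKmb (c * y)
    have hkey : Real.exp (-(c * (y + a)) ^ 2 / 4) * Real.exp (-(c * y) ^ 2 / 4) =
        Real.exp (-(c ^ 2 * a ^ 2) / 8) * Real.exp (-b * (y + a / 2) ^ 2) := by
      rw [← Real.exp_add, ← Real.exp_add]
      congr 1
      rw [hb]
      ring
    calc ‖f y‖ * |weberHermite l (c * (y + a))| * |weberHermite m (c * y)|
        ≤ S * (Kl * Real.exp (-(c * (y + a)) ^ 2 / 4)) * (Km * Real.exp (-(c * y) ^ 2 / 4)) := by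
          apply mul_le_mul
          apply mul_le_mul (hSle y) h1 (abs_nonneg _) hS0
          exact h2
          exact abs_nonneg _
          positivity
      _ = S * Kl * Km * (Real.exp (-(c * (y + a)) ^ 2 / 4) * Real.exp (-(c * y) ^ 2 / 4)) := by
          ring
      _ = g y := by rw [hkey, hg]; ring
  have hmain := MeasureTheory.norm_integral_le_of_norm_le hgint
    (Filter.Eventually.of_forall hbound)
  refine hmain.trans ?_
  have hint : ∫ y : ℝ, g y =
      S * Kl * Km * Real.exp (-(c ^ 2 * a ^ 2) / 8) * Real.sqrt (π / b) := by
    rw [hg]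
    rw [MeasureTheory.integral_const_mul]
    congr 1
    have := MeasureTheory.integral_add_right_eq_self (μ := MeasureTheory.volume)
      (fun y : ℝ => Real.exp (-b * y ^ 2)) (a / 2)
    rw [this, integral_gaussian]
  rw [hint]
  apply le_of_eq
  ring
end
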